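/- For all integers n ≥ 2 and k ≥ 2, every eigenvalue λ of the adjacency matrix of W_{n,k} over ℝ satisfies: λ ∈ {−1, 1}, or k − 1 ≤ λ ≤ k + 1, or −(k+1) ≤ λ ≤ −(k−1). In particular, W_{n,k} has no eigenvalue in the open interval (−1, 1). -/

import Mathlib

open Polynomial

/-- Vertex set of `W n k`: `Sum.inl (i, j)` is the vertex `v_{i,j}` and
`Sum.inr (i, j)` is the vertex `w_{i,j}`, for `i ∈ ℤ/nℤ` and `j ∈ {1, …, k}`. -/
abbrev WVert (n k : ℕ) : Type := (ZMod n × Fin k) ⊕ (ZMod n × Fin k)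

/-- Adjacency of `W n k`: `v_{i,j} ~ w_{i',l}` iff `i' = i`, or `i = i' + 1` and `j = l`. -/
def WAdj (n k : ℕ) : WVert n k → WVert n k → Prop
  | Sum.inl p, Sum.inr q => q.1 = p.1 ∨ (p.1 = q.1 + 1 ∧ p.2 = q.2)
  | Sum.inr q, Sum.inl p => q.1 = p.1 ∨ (p.1 = q.1 + 1 ∧ p.2 = q.2)
  | Sum.inl _, Sum.inl _ => False
  | Sum.inr _, Sum.inr _ => False

/-- The graph `W_{n,k}`: vertices `v_{i,j}` and `w_{i,j}` (`i ∈ ℤ/nℤ`, `1 ≤ j ≤ k`),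
with edges `v_{i,j} w_{i,l}` for all `i, j, l`, and `w_{i,j} v_{i+1,j}` for all `i, j`. -/
def W (n k : ℕ) : SimpleGraph (WVert n k) where
  Adj := WAdj n k
  symm := by
    constructor
    rintro (p | p) (q | q) h
    · exact h.elim
    · exact h
    · exact h
    · exact h.elim
  loopless := ⟨by rintro (p | p) h <;> exact h⟩

instance (n k : ℕ) : DecidableRel (WAdj n k) := fun a b =>
  match a, b with
  | Sum.inl p, Sum.inr q =>
      inferInstanceAs (Decidable (q.1 = p.1 ∨ (p.1 = q.1 + 1 ∧ p.2 = q.2)))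
  | Sum.inr q, Sum.inl p =>
      inferInstanceAs (Decidable (q.1 = p.1 ∨ (p.1 = q.1 + 1 ∧ p.2 = q.2)))
  | Sum.inl _, Sum.inl _ => inferInstanceAs (Decidable False)
  | Sum.inr _, Sum.inr _ => inferInstanceAs (Decidable False)

instance (n k : ℕ) : DecidableRel (W n k).Adj :=
  inferInstanceAs (DecidableRel (WAdj n k))


open Matrix Kronecker

namespace WProofAux

def P (n : ℕ) : Matrix (ZMod n) (ZMod n) ℝ := Matrix.of fun i i' => if i = i' + 1 then 1 else 0
def J (k : ℕ) : Matrix (Fin k) (Fin k) ℝ := Matrix.of fun _ _ => 1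
def B (n k : ℕ) : Matrix (ZMod n × Fin k) (ZMod n × Fin k) ℝ :=
  (1 : Matrix (ZMod n) (ZMod n) ℝ) ⊗ₖ J k + (P n) ⊗ₖ (1 : Matrix (Fin k) (Fin k) ℝ)
noncomputable def Q (n k : ℕ) : Matrix (ZMod n) (ZMod n) ℝ := (k : ℝ) • 1 + (P n + (P n)ᵀ)

lemma Jt (k : ℕ) : (J k)ᵀ = J k := rfl

section base
variable (n k : ℕ) [NeZero n]

lemma P_mul_Pt : P n * (P n)ᵀ = 1 := by
  ext a b
  simp only [Matrix.mul_apply, Matrix.transpose_apply, P, Matrix.of_apply, Matrix.one_apply]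
  rw [Finset.sum_eq_single (a - 1)]
  · rw [if_pos (by ring), one_mul]
    have : b = a - 1 + 1 ↔ a = b := by constructor <;> intro h <;> [skip; subst h] <;> [rw [h]; skip] <;> ring
    simp [this, eq_comm]
  · intro c _ hc
    rw [if_neg, zero_mul]
    intro h
    exact hc (by rw [h]; ring)
  · simp

lemma Pt_mul_P : (P n)ᵀ * P n = 1 := by
  ext a b
  simp only [Matrix.mul_apply, Matrix.transpose_apply, P, Matrix.of_apply, Matrix.one_apply]
  rw [Finset.sum_eq_single (a + 1)]
  · rw [if_pos rfl, one_mul]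
    have : a + 1 = b + 1 ↔ a = b := by constructor <;> intro h <;> [skip; rw [h]] ; exact add_right_cancel h
    simp [this]
  · intro c _ hc
    rw [if_neg hc, zero_mul]
  · simp

omit [NeZero n] in
lemma J_mul_J : J k * J k = (k : ℝ) • J k := by
  ext a b
  simp [Matrix.mul_apply, J, Finset.sum_const]

omit [NeZero n] in
lemma Bt : (B n k)ᵀ = (1 : Matrix (ZMod n) (ZMod n) ℝ) ⊗ₖ J k + (P n)ᵀ ⊗ₖ (1 : Matrix (Fin k) (Fin k) ℝ) := by
  rw [B, transpose_add, ← kroneckerMap_transpose, ← kroneckerMap_transpose, transpose_one, transpose_one, Jt]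

lemma R_mul_Rt : (1 + P n) * (1 + P n)ᵀ = (2:ℝ) • 1 + (P n + (P n)ᵀ) := by
  rw [transpose_add, transpose_one]
  simp only [mul_add, add_mul, one_mul, mul_one, P_mul_Pt]
  module

lemma S_mul_St : (1 - P n) * (1 - P n)ᵀ = (2:ℝ) • 1 - (P n + (P n)ᵀ) := by
  rw [transpose_sub, transpose_one]
  simp only [mul_sub, sub_mul, one_mul, mul_one, P_mul_Pt]
  module

lemma PP_mul_PPt : (P n * P n) * (P n * P n)ᵀ = 1 := by
  rw [transpose_mul]
  calc P n * P n * ((P n)ᵀ * (P n)ᵀ) = P n * ((P n * (P n)ᵀ) * (P n)ᵀ) := by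
        rw [mul_assoc, mul_assoc]
    _ = 1 := by rw [P_mul_Pt, one_mul, P_mul_Pt]

lemma RS_mul_RSt : ((1 + P n) * (1 - P n)) * ((1 + P n) * (1 - P n))ᵀ
    = (2:ℝ) • 1 - (P n * P n + (P n)ᵀ * (P n)ᵀ) := by
  have h1 : (1 + P n) * (1 - P n) = 1 - P n * P n := by
    noncomm_ring
  rw [h1, transpose_sub, transpose_one, transpose_mul]
  have h2 := PP_mul_PPt n
  rw [transpose_mul] at h2
  simp only [mul_sub, sub_mul, one_mul, mul_one, h2]
  module

lemma u_sq : (P n + (P n)ᵀ) * (P n + (P n)ᵀ)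
    = (P n * P n + (P n)ᵀ * (P n)ᵀ) + (2:ℝ) • 1 := by
  simp only [mul_add, add_mul, P_mul_Pt, Pt_mul_P]
  module

lemma B_mul_Bt : B n k * (B n k)ᵀ = Q n k ⊗ₖ J k + 1 := by
  rw [Bt, B, Q, add_mul, mul_add, mul_add, ← mul_kronecker_mul, ← mul_kronecker_mul,
    ← mul_kronecker_mul, ← mul_kronecker_mul]
  simp only [one_mul, mul_one, J_mul_J, P_mul_Pt, one_kronecker_one, kronecker_smul,
    add_kronecker, smul_kronecker]
  abel

lemma Bt_mul_B : (B n k)ᵀ * B n k = Q n k ⊗ₖ J k + 1 := by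
  rw [Bt, B, Q, add_mul, mul_add, mul_add, ← mul_kronecker_mul, ← mul_kronecker_mul,
    ← mul_kronecker_mul, ← mul_kronecker_mul]
  simp only [one_mul, mul_one, J_mul_J, Pt_mul_P, one_kronecker_one, kronecker_smul,
    add_kronecker, smul_kronecker]
  abel

end base

lemma ring_id1 {A : Type*} [Ring A] [Algebra ℝ A] (a c : ℝ) (X : A) :
    a • ((c • (1:A) + X) * (c • 1 + X)) - (a*c) • (c • (1:A) + X) = a • (X*X) + (a*c) • X := by
  simp only [mul_add, add_mul, smul_add, smul_smul, smul_mul_assoc, mul_smul_comm, one_mul, mul_one]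
  module

lemma ring_id2 {A : Type*} [Ring A] [Algebra ℝ A] (a : ℝ) (u v : A) (h : u * u = v + (2:ℝ) • 1) :
    (a^2+2*a) • ((a • (1:A) + u)) - a • ((a • (1:A) + u) * (a • 1 + u)) =
      a • ((2:ℝ) • (1:A) - v) + (a^2-2*a) • ((2:ℝ) • (1:A) - u) := by
  simp only [mul_add, add_mul, smul_add, smul_smul, smul_mul_assoc, mul_smul_comm, one_mul,
    mul_one, h, smul_sub]
  module

section kron
variable (n k : ℕ) [NeZero n]

lemma Q_eq : Q n k = ((k:ℝ) - 2) • 1 + (1 + P n) * (1 + P n)ᵀ := by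
  rw [R_mul_Rt, Q]; module

omit [NeZero n] in
lemma kron_t (X : Matrix (ZMod n) (ZMod n) ℝ) : (X ⊗ₖ J k)ᵀ = Xᵀ ⊗ₖ J k := by
  rw [← kroneckerMap_transpose, Jt]

lemma kron_factor (X Y : Matrix (ZMod n) (ZMod n) ℝ) :
    (X ⊗ₖ J k) * (Y ⊗ₖ J k)ᵀ = (k:ℝ) • ((X * Yᵀ) ⊗ₖ J k) := by
  rw [kron_t, ← mul_kronecker_mul, J_mul_J, kronecker_smul]

omit [NeZero n] in
lemma sub_kron (X Y : Matrix (ZMod n) (ZMod n) ℝ) :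
    (X - Y) ⊗ₖ J k = X ⊗ₖ J k - Y ⊗ₖ J k := by
  ext a b
  simp [sub_mul, Matrix.sub_apply]

lemma small1 :
    (Q n k ⊗ₖ J k) * ((Q n k ⊗ₖ J k) - ((k:ℝ) * ((k:ℝ) - 2)) • 1)
      = (((1 + P n) * (1 + P n)ᵀ) ⊗ₖ J k) * ((((1 + P n) * (1 + P n)ᵀ) ⊗ₖ J k))ᵀ
        + ((k:ℝ) - 2) • (((1 + P n) ⊗ₖ J k) * (((1 + P n) ⊗ₖ J k))ᵀ) := by
  rw [mul_sub, Matrix.mul_smul, mul_one]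
  have hXt : ((1 + P n) * (1 + P n)ᵀ)ᵀ = (1 + P n) * (1 + P n)ᵀ := by
    rw [transpose_mul, transpose_transpose]
  have e := ring_id1 (k:ℝ) ((k:ℝ) - 2) ((1 + P n) * (1 + P n)ᵀ)
  rw [← Q_eq n k] at e
  rw [kron_factor, kron_factor, hXt, smul_smul, ← mul_kronecker_mul, J_mul_J, kronecker_smul,
    ← smul_kronecker, ← smul_kronecker, ← smul_kronecker, ← smul_kronecker, ← sub_kron,
    ← add_kronecker, mul_comm ((k:ℝ) - 2) (k:ℝ), e]

lemma small2 :
    ((k:ℝ)^2 + 2*k) • (Q n k ⊗ₖ J k) - (Q n k ⊗ₖ J k) * (Q n k ⊗ₖ J k)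
      = ((((1 + P n) * (1 - P n)) ⊗ₖ J k) * ((((1 + P n) * (1 - P n)) ⊗ₖ J k))ᵀ)
        + ((k:ℝ) - 2) • (((1 - P n) ⊗ₖ J k) * (((1 - P n) ⊗ₖ J k))ᵀ) := by
  have hQ : Q n k = (k:ℝ) • 1 + (P n + (P n)ᵀ) := rfl
  have e := ring_id2 (k:ℝ) (P n + (P n)ᵀ) (P n * P n + (P n)ᵀ * (P n)ᵀ) (u_sq n)
  rw [← hQ] at e
  have hc : ((k:ℝ) - 2) * (k:ℝ) = (k:ℝ)^2 - 2*(k:ℝ) := by ring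
  rw [kron_factor, kron_factor, RS_mul_RSt, S_mul_St, smul_smul, hc, ← mul_kronecker_mul,
    J_mul_J, kronecker_smul, ← smul_kronecker, ← smul_kronecker, ← smul_kronecker,
    ← smul_kronecker, ← sub_kron, ← add_kronecker, e]

end kron

lemma adj_eq (n k : ℕ) [NeZero n] (hn : 2 ≤ n) :
    (W n k).adjMatrix ℝ = fromBlocks 0 (B n k) (B n k)ᵀ 0 := by
  haveI : Fact (1 < n) := ⟨hn⟩
  have key : ∀ p q : ZMod n × Fin k,
      (if (q.1 = p.1 ∨ (p.1 = q.1 + 1 ∧ p.2 = q.2)) then (1:ℝ) else 0) = B n k p q := by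
    intro p q
    have hone : (1 : ZMod n) ≠ 0 := one_ne_zero
    simp only [B, Matrix.add_apply, kroneckerMap_apply, Matrix.of_apply, J, P,
      Matrix.one_apply, mul_one, mul_ite, mul_zero, ite_mul, one_mul, zero_mul]
    by_cases h1 : p.1 = q.1
    · have h2 : ¬ (p.1 = q.1 + 1) := by
        rw [h1]; intro h; exact hone (by linear_combination -h)
      simp [h1, left_eq_add, hone]
    · have h1' : ¬ (q.1 = p.1) := fun hh => h1 hh.symm
      by_cases h2 : p.1 = q.1 + 1
      · by_cases h3 : p.2 = q.2 <;> simp [h1, h1', h2, h3]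
      · simp [h1, h1', h2]
  ext a b
  rcases a with p | p <;> rcases b with q | q
  · simp [SimpleGraph.adjMatrix_apply, fromBlocks]
    show ¬ (W n k).Adj (Sum.inl p) (Sum.inl q)
    exact fun h => h
  · rw [SimpleGraph.adjMatrix_apply]
    show (if (W n k).Adj (Sum.inl p) (Sum.inr q) then (1:ℝ) else 0) = B n k p q
    exact key p q
  · rw [SimpleGraph.adjMatrix_apply]
    show (if (W n k).Adj (Sum.inr p) (Sum.inl q) then (1:ℝ) else 0) = (B n k)ᵀ p q
    rw [Matrix.transpose_apply]
    exact key q p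
  · simp [SimpleGraph.adjMatrix_apply, fromBlocks]
    show ¬ (W n k).Adj (Sum.inr p) (Sum.inr q)
    exact fun h => h

section fb
variable {m : Type*} [Fintype m] [DecidableEq m]

lemma fbD_mul (X Y : Matrix m m ℝ) :
    fromBlocks X 0 0 X * fromBlocks Y 0 0 Y = fromBlocks (X*Y) 0 0 (X*Y) := by
  rw [fromBlocks_multiply]; simp

lemma fbD_t (X : Matrix m m ℝ) : (fromBlocks X 0 0 X)ᵀ = fromBlocks Xᵀ 0 0 Xᵀ := by
  rw [fromBlocks_transpose]; simp

lemma fbD_smul (c : ℝ) (X : Matrix m m ℝ) :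
    c • fromBlocks X 0 0 X = fromBlocks (c•X) 0 0 (c•X) := by
  rw [fromBlocks_smul]; simp

lemma fbD_sub (X Y : Matrix m m ℝ) :
    fromBlocks X 0 0 X - fromBlocks Y 0 0 Y = fromBlocks (X-Y) 0 0 (X-Y) := by
  simp [sub_eq_add_neg, fromBlocks_neg, fromBlocks_add]

lemma fbD_add (X Y : Matrix m m ℝ) :
    fromBlocks X 0 0 X + fromBlocks Y 0 0 Y = fromBlocks (X+Y) 0 0 (X+Y) := by
  rw [fromBlocks_add]; simp

lemma quad_nonneg (N : Matrix m m ℝ) (x : m → ℝ) : 0 ≤ x ⬝ᵥ ((N * Nᵀ) *ᵥ x) := by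
  rw [← Matrix.mulVec_mulVec, Matrix.dotProduct_mulVec, ← Matrix.mulVec_transpose]
  exact Finset.sum_nonneg fun i _ => mul_self_nonneg _

end fb

end WProofAux

set_option maxHeartbeats 2000000 in
/-- Every eigenvalue `μ` of `W_{n,k}` is `±1`, or lies in `[k−1, k+1]`, or lies in
`[−(k+1), −(k−1)]`; in particular `W_{n,k}` has no eigenvalue in the open interval
`(−1, 1)`. -/
theorem W_eigenvalue_location (n k : ℕ) [NeZero n] (hn : 2 ≤ n) (hk : 2 ≤ k) :
    (∀ μ ∈ spectrum ℝ ((W n k).adjMatrix ℝ),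
        μ = -1 ∨ μ = 1 ∨ ((k : ℝ) - 1 ≤ μ ∧ μ ≤ (k : ℝ) + 1) ∨
          (-((k : ℝ) + 1) ≤ μ ∧ μ ≤ -((k : ℝ) - 1))) ∧
      ∀ μ ∈ spectrum ℝ ((W n k).adjMatrix ℝ), μ ∉ Set.Ioo (-1 : ℝ) 1 := by
  open WProofAux Matrix Kronecker in
  have hk2 : (2:ℝ) ≤ (k:ℝ) := by exact_mod_cast hk
  have main : ∀ μ ∈ spectrum ℝ ((W n k).adjMatrix ℝ),
      μ = -1 ∨ μ = 1 ∨ ((k : ℝ) - 1 ≤ μ ∧ μ ≤ (k : ℝ) + 1) ∨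
        (-((k : ℝ) + 1) ≤ μ ∧ μ ≤ -((k : ℝ) - 1)) := by
    intro μ hμ
    set A := (W n k).adjMatrix ℝ with hAdef
    -- obtain an eigenvector
    obtain ⟨x, hx0, hx⟩ : ∃ x : WVert n k → ℝ, x ≠ 0 ∧ A *ᵥ x = μ • x := by
      rw [spectrum.mem_iff, Matrix.isUnit_iff_isUnit_det, isUnit_iff_ne_zero, not_not,
        ← Matrix.exists_mulVec_eq_zero_iff] at hμ
      obtain ⟨v, hv, hv2⟩ := hμ
      refine ⟨v, hv, ?_⟩
      have h3 : (algebraMap ℝ (Matrix (WVert n k) (WVert n k) ℝ)) μ *ᵥ v - A *ᵥ v = 0 := by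
        rw [← Matrix.sub_mulVec, hv2]
      rw [sub_eq_zero] at h3
      rw [← h3, Matrix.algebraMap_eq_diagonal]
      funext i
      simp [Matrix.mulVec, dotProduct, Matrix.diagonal, Finset.mul_sum]
    -- block structure of A² - 1
    have hQ1 : A * A - 1 = fromBlocks (Q n k ⊗ₖ J k) 0 0 (Q n k ⊗ₖ J k) := by
      rw [hAdef, adj_eq n k hn, fromBlocks_multiply]
      simp only [Matrix.mul_zero, Matrix.zero_mul, add_zero, zero_add, B_mul_Bt, Bt_mul_B]
      rw [← fromBlocks_one, fbD_sub]
      simp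
    -- the two PSD identities
    have big1 : (A * A - 1) * ((A * A - 1) - ((k:ℝ) * ((k:ℝ) - 2)) • 1)
        = (fromBlocks (((1 + P n) * (1 + P n)ᵀ) ⊗ₖ J k) 0 0 (((1 + P n) * (1 + P n)ᵀ) ⊗ₖ J k))
            * (fromBlocks (((1 + P n) * (1 + P n)ᵀ) ⊗ₖ J k) 0 0 (((1 + P n) * (1 + P n)ᵀ) ⊗ₖ J k))ᵀ
          + ((k:ℝ) - 2) • ((fromBlocks ((1 + P n) ⊗ₖ J k) 0 0 ((1 + P n) ⊗ₖ J k))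
            * (fromBlocks ((1 + P n) ⊗ₖ J k) 0 0 ((1 + P n) ⊗ₖ J k))ᵀ) := by
      rw [hQ1, ← fromBlocks_one, fbD_smul, fbD_sub, fbD_mul, small1 n k,
        fbD_t, fbD_mul, fbD_t, fbD_mul, fbD_smul, fbD_add]
    have big2 : ((k:ℝ)^2 + 2*k) • (A * A - 1) - (A * A - 1) * (A * A - 1)
        = (fromBlocks (((1 + P n) * (1 - P n)) ⊗ₖ J k) 0 0 (((1 + P n) * (1 - P n)) ⊗ₖ J k))
            * (fromBlocks (((1 + P n) * (1 - P n)) ⊗ₖ J k) 0 0 (((1 + P n) * (1 - P n)) ⊗ₖ J k))ᵀ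
          + ((k:ℝ) - 2) • ((fromBlocks ((1 - P n) ⊗ₖ J k) 0 0 ((1 - P n) ⊗ₖ J k))
            * (fromBlocks ((1 - P n) ⊗ₖ J k) 0 0 ((1 - P n) ⊗ₖ J k))ᵀ) := by
      rw [hQ1, fbD_smul, fbD_mul, fbD_sub, small2 n k,
        fbD_t, fbD_mul, fbD_t, fbD_mul, fbD_smul, fbD_add]
    -- eigen computations
    have h2x : (A * A) *ᵥ x = (μ^2) • x := by
      rw [← Matrix.mulVec_mulVec, hx, Matrix.mulVec_smul, hx, smul_smul, ← sq]
    have hD : (A * A - 1) *ᵥ x = (μ^2 - 1) • x := by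
      rw [Matrix.sub_mulVec, h2x, Matrix.one_mulVec, sub_smul, one_smul]
    have hsubx : ((A * A - 1) - ((k:ℝ) * ((k:ℝ) - 2)) • 1) *ᵥ x
        = ((μ^2 - 1) - (k:ℝ) * ((k:ℝ) - 2)) • x := by
      rw [Matrix.sub_mulVec, hD, Matrix.smul_mulVec, Matrix.one_mulVec, ← sub_smul]
    have hv1 : ((A * A - 1) * ((A * A - 1) - ((k:ℝ) * ((k:ℝ) - 2)) • 1)) *ᵥ x
        = (((μ^2 - 1) - (k:ℝ) * ((k:ℝ) - 2)) * (μ^2 - 1)) • x := by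
      rw [← Matrix.mulVec_mulVec, hsubx, Matrix.mulVec_smul, hD, smul_smul]
    have hv2 : (((k:ℝ)^2 + 2*k) • (A * A - 1) - (A * A - 1) * (A * A - 1)) *ᵥ x
        = (((k:ℝ)^2 + 2*k) * (μ^2 - 1) - (μ^2 - 1) * (μ^2 - 1)) • x := by
      rw [Matrix.sub_mulVec, Matrix.smul_mulVec, hD, ← Matrix.mulVec_mulVec, hD,
        Matrix.mulVec_smul, hD, smul_smul, smul_smul, ← sub_smul]
      
    -- positivity
    have hd : 0 < x ⬝ᵥ x := by
      rcases (Finset.sum_nonneg fun i (_ : i ∈ Finset.univ) => mul_self_nonneg (x i)).lt_or_eq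
        with h | h
      · exact h
      · exact absurd (dotProduct_self_eq_zero.mp h.symm) hx0
    have psd : ∀ (N1 N2 : Matrix (WVert n k) (WVert n k) ℝ),
        0 ≤ x ⬝ᵥ ((N1 * N1ᵀ + ((k:ℝ) - 2) • (N2 * N2ᵀ)) *ᵥ x) := by
      intro N1 N2
      rw [Matrix.add_mulVec, dotProduct_add, Matrix.smul_mulVec,
        dotProduct_smul, smul_eq_mul]
      have := quad_nonneg N1 x
      have := quad_nonneg N2 x
      nlinarith [quad_nonneg N1 x, quad_nonneg N2 x]
    have e1 : 0 ≤ ((μ^2 - 1) - (k:ℝ) * ((k:ℝ) - 2)) * (μ^2 - 1) := by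
      have h := psd
        (fromBlocks (((1 + P n) * (1 + P n)ᵀ) ⊗ₖ J k) 0 0 (((1 + P n) * (1 + P n)ᵀ) ⊗ₖ J k))
        (fromBlocks ((1 + P n) ⊗ₖ J k) 0 0 ((1 + P n) ⊗ₖ J k))
      rw [← big1, hv1, dotProduct_smul, smul_eq_mul] at h
      exact (mul_nonneg_iff_of_pos_right hd).mp h
    have e2 : 0 ≤ ((k:ℝ)^2 + 2*k) * (μ^2 - 1) - (μ^2 - 1) * (μ^2 - 1) := by
      have h := psd
        (fromBlocks (((1 + P n) * (1 - P n)) ⊗ₖ J k) 0 0 (((1 + P n) * (1 - P n)) ⊗ₖ J k))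
        (fromBlocks ((1 - P n) ⊗ₖ J k) 0 0 ((1 - P n) ⊗ₖ J k))
      rw [← big2, hv2, dotProduct_smul, smul_eq_mul] at h
      exact (mul_nonneg_iff_of_pos_right hd).mp h
    clear_value A
    clear hQ1 big1 big2 h2x hD hsubx hv1 hv2 hd hx psd hx0 hμ hAdef x A
    -- scalar endgame
    have h1le : 1 ≤ μ^2 := by
      by_contra hcon
      push_neg at hcon
      nlinarith [e2, sq_nonneg μ]
    rcases h1le.eq_or_lt with heq | hlt
    · have : (μ - 1) * (μ + 1) = 0 := by linear_combination -heq
      rcases mul_eq_zero.mp this with h | h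
      · exact Or.inr (Or.inl (by linarith))
      · exact Or.inl (by linarith)
    · have hlow : ((k:ℝ) - 1)^2 ≤ μ^2 := by nlinarith [e1, hlt]
      have hhigh : μ^2 ≤ ((k:ℝ) + 1)^2 := by nlinarith [e2, hlt]
      rcases le_or_gt 0 μ with hpos | hneg
      · refine Or.inr (Or.inr (Or.inl ⟨?_, ?_⟩)) <;> nlinarith [hlow, hhigh, hk2, hpos]
      · refine Or.inr (Or.inr (Or.inr ⟨?_, ?_⟩)) <;> nlinarith [hlow, hhigh, hk2, hneg]
  refine ⟨main, fun μ hμ hmem => ?_⟩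
  obtain ⟨hm1, hm2⟩ := hmem
  rcases main μ hμ with h | h | ⟨h, _⟩ | ⟨_, h⟩ <;> [linarith; linarith; nlinarith; nlinarith]
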